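/- Under the hypotheses of the agent-joining construction (L ⪰ 0, ker(L) = Π(p̃), L_ff ≻ 0, and W_vv invertible), the extended Laplacian L⁺ = L_pad + M_pad satisfies L⁺ ⪰ 0 and ker(L⁺) = Π(p̃⁺), where p̃⁺ = [p̃; p̃_v]. -/

import Mathlib

open Matrix Kronecker

/-- The configuration obtained from the nominal one by non-uniform scaling `s`
(in the frame `R`) and translation `τ`. -/
noncomputable def nsParam (d k : ℕ) (R : Matrix (Fin d) (Fin d) ℝ)
    (q : Fin k × Fin d → ℝ) (s τ : Fin d → ℝ) : Fin k × Fin d → ℝ :=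
  ((1 : Matrix (Fin k) (Fin k) ℝ) ⊗ₖ (R * Matrix.diagonal s * Rᵀ)).mulVec q
    + fun x => τ x.2

/-- The translation plus non-uniform scaling shape space. -/
def nsShape (d k : ℕ) (R : Matrix (Fin d) (Fin d) ℝ)
    (q : Fin k × Fin d → ℝ) : Set (Fin k × Fin d → ℝ) :=
  {p | ∃ s τ : Fin d → ℝ, p = nsParam d k R q s τ}

/-- The shape space of the extended formation (old agents plus the new agent),
on the coordinates `(Fin n × Fin d) ⊕ Fin d`. -/
def nsShapeExt (d n : ℕ) (R : Matrix (Fin d) (Fin d) ℝ)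
    (pt : Fin n × Fin d → ℝ) (ptv : Fin d → ℝ) :
    Set ((Fin n × Fin d) ⊕ Fin d → ℝ) :=
  {x | ∃ s τ : Fin d → ℝ,
    (∀ a : Fin n, (fun k => x (Sum.inl (a, k)))
        = (R * Matrix.diagonal s * Rᵀ).mulVec (fun k => pt (a, k)) + τ) ∧
      (fun k => x (Sum.inr k)) = (R * Matrix.diagonal s * Rᵀ).mulVec ptv + τ}

/-- The matrix-valued edge weight `diag(Rᵀ(x − y))Rᵀ`. -/
def nsWeight (d : ℕ) (R : Matrix (Fin d) (Fin d) ℝ) (x y : Fin d → ℝ) :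
    Matrix (Fin d) (Fin d) ℝ :=
  Matrix.diagonal (Rᵀ.mulVec (x - y)) * Rᵀ

/-- The padded constraint row block `[… W_jv … W_vi … | −W_vv]` for the
triplet `(i, j, v)`, acting on the extended coordinates. -/
def constraintBlock (d n : ℕ) (i j : Fin n)
    (Wjv Wvi : Matrix (Fin d) (Fin d) ℝ) :
    Matrix (Fin d) ((Fin n × Fin d) ⊕ Fin d) ℝ :=
  Matrix.of fun r c =>
    Sum.elim
      (fun q : Fin n × Fin d =>
        if q.1 = i then Wjv r q.2 else if q.1 = j then Wvi r q.2 else 0)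
      (fun k => -(Wjv + Wvi) r k) c


section Aux
variable {d : ℕ} {R : Matrix (Fin d) (Fin d) ℝ}

lemma nsWeight_mulVec (x y v : Fin d → ℝ) :
    (nsWeight d R x y).mulVec v = fun k => (Rᵀ.mulVec (x - y)) k * (Rᵀ.mulVec v) k := by
  funext k
  rw [nsWeight, ← Matrix.mulVec_mulVec, Matrix.mulVec_diagonal]

lemma Rt_A (hR : Rᵀ * R = 1) (s w : Fin d → ℝ) :
    Rᵀ.mulVec ((R * Matrix.diagonal s * Rᵀ).mulVec w)
      = fun k => s k * (Rᵀ.mulVec w) k := by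
  funext k
  rw [Matrix.mulVec_mulVec, ← Matrix.mul_assoc, ← Matrix.mul_assoc, hR, Matrix.one_mul,
    ← Matrix.mulVec_mulVec, Matrix.mulVec_diagonal]

lemma nsWeight_add (pv pi pj : Fin d → ℝ) :
    nsWeight d R pj pv + nsWeight d R pv pi = nsWeight d R pj pi := by
  ext a b
  simp only [nsWeight, Matrix.add_apply, Matrix.diagonal_mul, Matrix.mulVec_sub, Pi.sub_apply]
  ring

lemma cancel_id (hR : Rᵀ * R = 1) (s τ pv pi pj : Fin d → ℝ) :
    (nsWeight d R pj pv).mulVec ((R * Matrix.diagonal s * Rᵀ).mulVec pi + τ)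
      + (nsWeight d R pv pi).mulVec ((R * Matrix.diagonal s * Rᵀ).mulVec pj + τ)
      = (nsWeight d R pj pi).mulVec ((R * Matrix.diagonal s * Rᵀ).mulVec pv + τ) := by
  funext k
  simp only [Matrix.mulVec_add, nsWeight_mulVec, Pi.add_apply, Rt_A hR, Matrix.mulVec_sub,
    Pi.sub_apply]
  ring

lemma constraintBlock_mulVec {n : ℕ} (i j : Fin n) (hij : i ≠ j)
    (Wjv Wvi : Matrix (Fin d) (Fin d) ℝ) (x : (Fin n × Fin d) ⊕ Fin d → ℝ) :
    (constraintBlock d n i j Wjv Wvi).mulVec x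
      = Wjv.mulVec (fun k => x (Sum.inl (i, k)))
        + Wvi.mulVec (fun k => x (Sum.inl (j, k)))
        - (Wjv + Wvi).mulVec (fun k => x (Sum.inr k)) := by
  funext r
  have key : ∀ b : Fin n,
      (∑ l : Fin d, (if b = i then Wjv r l else if b = j then Wvi r l else 0) * x (Sum.inl (b, l)))
        = (if b = i then ∑ l : Fin d, Wjv r l * x (Sum.inl (i, l)) else 0)
          + (if b = j then ∑ l : Fin d, Wvi r l * x (Sum.inl (j, l)) else 0) := by
    intro b
    by_cases h1 : b = i
    · subst h1
      simp [hij]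
    · by_cases h2 : b = j
      · subst h2; simp [h1]
      · simp [h1, h2]
  simp only [constraintBlock, Matrix.mulVec, dotProduct, Fintype.sum_sum_type,
    Matrix.of_apply, Sum.elim_inl, Sum.elim_inr, Fintype.sum_prod_type, Pi.sub_apply,
    Pi.add_apply]
  rw [Finset.sum_congr rfl (fun b _ => key b), Finset.sum_add_distrib,
    Finset.sum_ite_eq' Finset.univ i, Finset.sum_ite_eq' Finset.univ j]
  simp [Matrix.mulVec, dotProduct, Matrix.add_apply, add_mul, neg_mul,
    Finset.sum_add_distrib, sub_eq_add_neg, Finset.sum_neg_distrib]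

lemma mem_nsShape_iff {k : ℕ} (q p : Fin k × Fin d → ℝ) :
    p ∈ nsShape d k R q ↔ ∃ s τ : Fin d → ℝ, ∀ a : Fin k,
      (fun l => p (a, l))
        = (R * Matrix.diagonal s * Rᵀ).mulVec (fun l => q (a, l)) + τ := by
  have hparam : ∀ s τ : Fin d → ℝ, nsParam d k R q s τ
      = fun z => ((R * Matrix.diagonal s * Rᵀ).mulVec (fun l => q (z.1, l))) z.2 + τ z.2 := by
    intro s τ
    funext z
    obtain ⟨a, c⟩ := z
    simp only [nsParam, Pi.add_apply, Matrix.mulVec, dotProduct,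
      Fintype.sum_prod_type, Matrix.kroneckerMap_apply, Matrix.one_apply, ite_mul, one_mul,
      zero_mul, Finset.sum_ite_irrel, Finset.sum_const_zero, Finset.sum_ite_eq,
      Finset.mem_univ, if_true]
  constructor
  · rintro ⟨s, τ, rfl⟩
    exact ⟨s, τ, fun a => by funext l; rw [hparam]; rfl⟩
  · rintro ⟨s, τ, h⟩
    refine ⟨s, τ, ?_⟩
    funext z
    rw [hparam]
    exact congrFun (h z.1) z.2

end Aux

theorem stmt_15 (d n m : ℕ) (hm : 1 ≤ m) (hmn : m ≤ n)
    (R : Matrix (Fin d) (Fin d) ℝ) (hR : Rᵀ * R = 1) (hdet : R.det = 1)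
    (pt : Fin n × Fin d → ℝ) (ptv : Fin d → ℝ)
    (L : Matrix (Fin n × Fin d) (Fin n × Fin d) ℝ)
    (hLpsd : L.PosSemidef)
    (hker : {x | L.mulVec x = 0} = nsShape d n R pt)
    (hLff : (L.submatrix
        (fun q : {a : Fin n // m ≤ (a : ℕ)} × Fin d => ((q.1 : Fin n), q.2))
        (fun q : {a : Fin n // m ≤ (a : ℕ)} × Fin d => ((q.1 : Fin n), q.2))).PosDef)
    (i j : Fin n) (hij : i ≠ j)
    (hWvv : IsUnit (nsWeight d R (fun k => pt (j, k)) (fun k => pt (i, k))))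
    (dv : Fin d → ℝ) (hdv : ∀ r, 0 < dv r) :
    (Matrix.fromBlocks L 0 0 (0 : Matrix (Fin d) (Fin d) ℝ)
      + (constraintBlock d n i j
            (nsWeight d R (fun k => pt (j, k)) ptv)
            (nsWeight d R ptv (fun k => pt (i, k))))ᵀ
          * Matrix.diagonal dv
          * constraintBlock d n i j
              (nsWeight d R (fun k => pt (j, k)) ptv)
              (nsWeight d R ptv (fun k => pt (i, k)))).PosSemidef ∧
    {x | (Matrix.fromBlocks L 0 0 (0 : Matrix (Fin d) (Fin d) ℝ)
      + (constraintBlock d n i j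
            (nsWeight d R (fun k => pt (j, k)) ptv)
            (nsWeight d R ptv (fun k => pt (i, k))))ᵀ
          * Matrix.diagonal dv
          * constraintBlock d n i j
              (nsWeight d R (fun k => pt (j, k)) ptv)
              (nsWeight d R ptv (fun k => pt (i, k)))).mulVec x = 0}
      = nsShapeExt d n R pt ptv := by
  classical
  set Wjv := nsWeight d R (fun k => pt (j, k)) ptv with hWjv
  set Wvi := nsWeight d R ptv (fun k => pt (i, k)) with hWvi
  set M := constraintBlock d n i j Wjv Wvi with hMdef
  set Lp := Matrix.fromBlocks L (0 : Matrix (Fin n × Fin d) (Fin d) ℝ)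
      (0 : Matrix (Fin d) (Fin n × Fin d) ℝ) (0 : Matrix (Fin d) (Fin d) ℝ) with hLpdef
  have hWsum : Wjv + Wvi = nsWeight d R (fun k => pt (j, k)) (fun k => pt (i, k)) :=
    nsWeight_add ptv (fun k => pt (i, k)) (fun k => pt (j, k))
  have hLpH : Lp.PosSemidef := by
    refine Matrix.PosSemidef.of_dotProduct_mulVec_nonneg ?_ ?_
    · show Lpᴴ = Lp
      have hLsym : Lᵀ = L := by
        rw [← Matrix.conjTranspose_eq_transpose_of_trivial]; exact hLpsd.1
      simp [hLpdef, Matrix.fromBlocks_conjTranspose, Matrix.fromBlocks_transpose, hLsym,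
        Matrix.conjTranspose_eq_transpose_of_trivial]
    · intro x
      have h0 := hLpsd.dotProduct_mulVec_nonneg (fun q => x (Sum.inl q))
      simp only [star_trivial] at h0 ⊢
      have : x ⬝ᵥ Lp *ᵥ x
          = (fun q => x (Sum.inl q)) ⬝ᵥ L *ᵥ (fun q => x (Sum.inl q)) := by
        simp [hLpdef, Matrix.fromBlocks_mulVec, dotProduct, Fintype.sum_sum_type,
          Function.comp_def]
      rw [this]; exact h0
  have hDpsd : (Matrix.diagonal dv).PosSemidef :=
    Matrix.PosSemidef.diagonal (fun r => (hdv r).le)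
  have hQpsd : (Mᵀ * Matrix.diagonal dv * M).PosSemidef := by
    have h := hDpsd.conjTranspose_mul_mul_same M
    simpa [Matrix.conjTranspose_eq_transpose_of_trivial] using h
  have hkeriff : ∀ x : (Fin n × Fin d) ⊕ Fin d → ℝ,
      (Lp + Mᵀ * Matrix.diagonal dv * M) *ᵥ x = 0
        ↔ (L *ᵥ (fun q => x (Sum.inl q)) = 0 ∧ M *ᵥ x = 0) := by
    intro x
    constructor
    · intro h
      have hq : x ⬝ᵥ ((Lp + Mᵀ * Matrix.diagonal dv * M) *ᵥ x) = 0 := by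
        rw [h, dotProduct_zero]
      rw [Matrix.add_mulVec, dotProduct_add] at hq
      have h1 : 0 ≤ x ⬝ᵥ Lp *ᵥ x := by simpa using hLpH.dotProduct_mulVec_nonneg x
      have h2 : 0 ≤ x ⬝ᵥ (Mᵀ * Matrix.diagonal dv * M) *ᵥ x := by simpa using hQpsd.dotProduct_mulVec_nonneg x
      have e1 : x ⬝ᵥ Lp *ᵥ x = 0 := by linarith
      have e2 : x ⬝ᵥ (Mᵀ * Matrix.diagonal dv * M) *ᵥ x = 0 := by linarith
      have hLpx : Lp *ᵥ x = 0 :=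
        (hLpH.dotProduct_mulVec_zero_iff x).mp (by simpa using e1)
      have hMx : M *ᵥ x = 0 := by
        have e4 : x ⬝ᵥ (Mᵀ * Matrix.diagonal dv * M) *ᵥ x
            = (M *ᵥ x) ⬝ᵥ (Matrix.diagonal dv *ᵥ (M *ᵥ x)) := by
          calc x ⬝ᵥ (Mᵀ * Matrix.diagonal dv * M) *ᵥ x
              = x ⬝ᵥ Mᵀ *ᵥ (Matrix.diagonal dv *ᵥ (M *ᵥ x)) := by
                rw [Matrix.mulVec_mulVec, Matrix.mulVec_mulVec]
            _ = (x ᵥ* Mᵀ) ⬝ᵥ (Matrix.diagonal dv *ᵥ (M *ᵥ x)) :=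
                dotProduct_mulVec _ _ _
            _ = (M *ᵥ x) ⬝ᵥ (Matrix.diagonal dv *ᵥ (M *ᵥ x)) := by
                rw [Matrix.vecMul_transpose]
        have e3 : (M *ᵥ x) ⬝ᵥ (Matrix.diagonal dv *ᵥ (M *ᵥ x)) = 0 := by
          rw [← e4]; exact e2
        by_contra hne
        have hpos := (Matrix.posDef_diagonal_iff.mpr hdv).dotProduct_mulVec_pos hne
        simp only [star_trivial] at hpos
        exact absurd e3 (ne_of_gt hpos)
      refine ⟨?_, hMx⟩
      funext q
      have := congrFun hLpx (Sum.inl q)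
      simpa [hLpdef, Matrix.fromBlocks_mulVec, Function.comp_def] using this
    · rintro ⟨h1, h2⟩
      rw [Matrix.add_mulVec]
      have hz : Lp *ᵥ x = 0 := by
        funext c
        cases c with
        | inl q =>
          have := congrFun h1 q
          simpa [hLpdef, Matrix.fromBlocks_mulVec, Function.comp_def] using this
        | inr k => simp [hLpdef, Matrix.fromBlocks_mulVec]
      rw [hz, ← Matrix.mulVec_mulVec, h2, Matrix.mulVec_zero, add_zero]
  refine ⟨hLpH.add hQpsd, ?_⟩
  ext x
  simp only [Set.mem_setOf_eq]
  rw [hkeriff x, nsShapeExt, Set.mem_setOf_eq]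
  constructor
  · rintro ⟨h1, h2⟩
    have hx : (fun q => x (Sum.inl q)) ∈ nsShape d n R pt := by
      rw [← hker]; exact h1
    rw [mem_nsShape_iff] at hx
    obtain ⟨s, τ, hx⟩ := hx
    refine ⟨s, τ, fun a => hx a, ?_⟩
    rw [constraintBlock_mulVec i j hij] at h2
    have hW : (Wjv + Wvi) *ᵥ ((R * Matrix.diagonal s * Rᵀ) *ᵥ ptv + τ)
        = (Wjv + Wvi) *ᵥ (fun k => x (Sum.inr k)) := by
      have h2' : (Wjv + Wvi) *ᵥ (fun k => x (Sum.inr k))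
          = Wjv *ᵥ (fun k => x (Sum.inl (i, k))) + Wvi *ᵥ (fun k => x (Sum.inl (j, k))) := by
        rw [sub_eq_zero] at h2
        exact h2.symm
      have hcan := cancel_id hR s τ ptv (fun k => pt (i, k)) (fun k => pt (j, k))
      rw [← hWjv, ← hWvi, ← hWsum] at hcan
      rw [← hcan, ← hx i, ← hx j]
      exact h2'.symm
    have hU : IsUnit (Wjv + Wvi) := by rw [hWsum]; exact hWvv
    exact (Matrix.mulVec_injective_iff_isUnit.mpr hU hW).symm
  · rintro ⟨s, τ, hold, hv⟩
    constructor
    · have hx : (fun q => x (Sum.inl q)) ∈ nsShape d n R pt :=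
        (mem_nsShape_iff pt _).mpr ⟨s, τ, fun a => hold a⟩
      rw [← hker] at hx; exact hx
    · rw [constraintBlock_mulVec i j hij, hold i, hold j, hv, hWjv, hWvi,
        nsWeight_add ptv (fun k => pt (i, k)) (fun k => pt (j, k)),
        cancel_id hR s τ ptv (fun k => pt (i, k)) (fun k => pt (j, k)), sub_self]
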